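/- Let q ∈ ℂ \ {0} with |q| ≠ 1, let n ∈ ℕ, and let P be a nonzero polynomial with deg P ≥ n and canonical q-chain factorization P(z) = A ∏_{j=1}^{N}[z - z_j]_q^{n_j}. Then gcd(P, D_q P, ..., D_q^n P) = ∏_{j=1}^{N}[z - z_j]_q^{max(n_j - n, 0)} up to constant multiple, and consequently deg(gcd(P, D_q P, ..., D_q^n P)) = Σ_{j=1}^{N} max(n_j - n, 0). -/

import Mathlib

open Polynomial

noncomputable section

/-- q-number [n]_q = 1 + q + ... + q^{n-1}. -/
def qNum (q : ℂ) (n : ℕ) : ℂ := ∑ i ∈ Finset.range n, q ^ i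

/-- q-factorial. -/
def qFact (q : ℂ) (n : ℕ) : ℂ := ∏ i ∈ Finset.range n, qNum q (i + 1)

/-- q-binomial coefficient. -/
def qBinom (q : ℂ) (k j : ℕ) : ℂ := qFact q k / (qFact q j * qFact q (k - j))

/-- q-derivative of a function. -/
def Dqf (q : ℂ) (f : ℂ → ℂ) : ℂ → ℂ := fun z => (f (q * z) - f z) / (q * z - z)

/-- q-analogue of the power (z-w)^n : [z-w]_q^n = (z-w)(z-qw)...(z-q^{n-1}w). -/
def qPow (q w : ℂ) (n : ℕ) : Polynomial ℂ := ∏ i ∈ Finset.range n, (X - C (q ^ i * w))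

/-- q-derivative as a polynomial operation. -/
def qDeriv (q : ℂ) (f : Polynomial ℂ) : Polynomial ℂ :=
  C (q - 1)⁻¹ * ((f.comp (C q * X) - f) /ₘ X)

/-- `w` is a zero of `f` with q-weight `n`. -/
def IsZeroQWeight (q : ℂ) (f : Polynomial ℂ) (w : ℂ) (n : ℕ) : Prop :=
  (w = 0 ∧ f ≠ 0 ∧ Polynomial.rootMultiplicity 0 f = n) ∨
  (w ≠ 0 ∧ (∀ k < n, f.eval (q ^ k * w) = 0) ∧ f.eval (q ^ n * w) ≠ 0)

/-- Canonical q-chain factorization of a polynomial. -/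
structure QFactorization (q : ℂ) (P : Polynomial ℂ) where
  N : ℕ
  z : Fin N → ℂ
  n : Fin N → ℕ
  A : ℂ
  A_ne : A ≠ 0
  n_pos : ∀ j, 1 ≤ n j
  eq : P = Polynomial.C A * ∏ j, qPow q (z j) (n j)
  deg_sum : ∑ j, n j = P.natDegree
  chain : ∀ j : Fin N,
    IsZeroQWeight q (∏ k ∈ Finset.univ.filter (fun k => j ≤ k), qPow q (z k) (n k)) (z j) (n j)
  maximal : ∀ j : Fin N, z j ≠ 0 →
    (∏ k ∈ Finset.univ.filter (fun k => j ≤ k), qPow q (z k) (n k)).eval (q⁻¹ * z j) ≠ 0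

/-- q-difference radical associated to a canonical factorization. -/
def radQ {q : ℂ} {P : Polynomial ℂ} (F : QFactorization q P) : Polynomial ℂ :=
  ∏ j, (X - C (F.z j))

local instance : DecidableEq (Polynomial ℂ) := Classical.decEq _

/-- Truncated q-radical of level μ. -/
def radTruncQ {q : ℂ} {P : Polynomial ℂ} (F : QFactorization q P) (μ : ℕ) : Polynomial ℂ :=
  EuclideanDomain.gcd (∏ j, qPow q (F.z j) (F.n j)) (∏ j, qPow q (F.z j) μ)

/-- f and g have a nonconstant common q-divisor. -/
def HasCommonQDivisor (q : ℂ) (f g : Polynomial ℂ) : Prop :=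
  ∃ (z₀ z₁ z₂ : ℂ) (m n : ℕ) (F G : Polynomial ℂ), 1 ≤ m ∧ 1 ≤ n ∧
    f = qPow q z₁ m * F ∧ g = qPow q z₂ n * G ∧ (z₀ = z₁ ∨ z₀ = z₂) ∧
    f * g = qPow q z₀ (m + n) * (F * G)

/-- q-shifted power [P]_q^n(z) = P(z)P(qz)...(P(q^{n-1}z)). -/
def qShiftPow (q : ℂ) (P : Polynomial ℂ) (n : ℕ) : Polynomial ℂ :=
  ∏ i ∈ Finset.range n, P.comp (C (q ^ i) * X)

/-- gcd of a list of polynomials. -/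
def gcdList (l : List (Polynomial ℂ)) : Polynomial ℂ := l.foldr EuclideanDomain.gcd 0
namespace QAux

lemma qpow_inj {q : ℂ} (hq0 : q ≠ 0) (habs : ‖q‖ ≠ 1) {a b : ℕ}
    (h : q ^ a = q ^ b) : a = b := by
  have h0 : (0:ℝ) < ‖q‖ := norm_pos_iff.mpr hq0
  have := congrArg norm h
  simp only [norm_pow] at this
  exact pow_right_injective₀ h0 habs this

lemma qpow_ne_one {q : ℂ} (hq0 : q ≠ 0) (habs : ‖q‖ ≠ 1) {d : ℕ}
    (hd : d ≠ 0) : q ^ d ≠ 1 := by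
  intro h
  exact hd (qpow_inj hq0 habs (h.trans (pow_zero q).symm))

lemma q_ne_one {q : ℂ} (habs : ‖q‖ ≠ 1) : q ≠ 1 := by
  intro h; rw [h] at habs; simp at habs

lemma coeff_comp_C_mul_X (q : ℂ) (f : ℂ[X]) (i : ℕ) :
    (f.comp (C q * X)).coeff i = q ^ i * f.coeff i := by
  induction f using Polynomial.induction_on' with
  | add p r hp hr => simp [add_comp, hp, hr, mul_add]
  | monomial m a =>
    rw [monomial_comp]
    rw [mul_pow, ← C_pow, ← mul_assoc, ← C_mul]
    rw [C_mul_X_pow_eq_monomial, coeff_monomial, coeff_monomial]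
    by_cases h : i = m
    · subst h; simp [mul_comm]
    · simp [Ne.symm h, h]

lemma qDeriv_key {q : ℂ} (hq1 : q ≠ 1) (f : ℂ[X]) :
    C (q - 1) * (X * qDeriv q f) = f.comp (C q * X) - f := by
  set p := f.comp (C q * X) - f with hp
  have hmod : p %ₘ X = 0 := by
    rw [Polynomial.modByMonic_X]
    simp [hp, Polynomial.eval_comp]
  have hdiv : X * (p /ₘ X) = p := by
    conv_rhs => rw [← Polynomial.modByMonic_add_div p X]
    rw [hmod, zero_add]
  have hC : C (q - 1) * C (q - 1)⁻¹ = 1 := by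
    rw [← C_mul, mul_inv_cancel₀ (sub_ne_zero.mpr hq1), C_1]
  calc C (q - 1) * (X * (C (q - 1)⁻¹ * (p /ₘ X)))
      = (C (q - 1) * C (q - 1)⁻¹) * (X * (p /ₘ X)) := by ring
    _ = p := by rw [hC, one_mul, hdiv]

lemma comp_eq_add_qDeriv {q : ℂ} (hq1 : q ≠ 1) (f : ℂ[X]) :
    f.comp (C q * X) = f + C (q - 1) * (X * qDeriv q f) := by
  rw [qDeriv_key hq1]; ring

lemma qDeriv_coeff {q : ℂ} (hq1 : q ≠ 1) (f : ℂ[X]) (i : ℕ) :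
    (q - 1) * (qDeriv q f).coeff i = (q ^ (i + 1) - 1) * f.coeff (i + 1) := by
  have h := congrArg (fun p : ℂ[X] => p.coeff (i + 1)) (qDeriv_key hq1 f)
  simp only [coeff_C_mul, coeff_X_mul, coeff_sub, coeff_comp_C_mul_X] at h
  rw [h]; ring

lemma qDeriv_coeff_eq_zero {q : ℂ} (hq1 : q ≠ 1) {f : ℂ[X]} {i : ℕ}
    (h : f.coeff (i + 1) = 0) : (qDeriv q f).coeff i = 0 := by
  have hkey := qDeriv_coeff hq1 f i
  rw [h, mul_zero] at hkey
  exact (mul_eq_zero.mp hkey).resolve_left (sub_ne_zero.mpr hq1)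

lemma qDeriv_coeff_ne_zero {q : ℂ} (hq0 : q ≠ 0) (habs : ‖q‖ ≠ 1) {f : ℂ[X]} {i : ℕ}
    (h : f.coeff (i + 1) ≠ 0) : (qDeriv q f).coeff i ≠ 0 := by
  have hq1 : q ≠ 1 := q_ne_one habs
  have hkey := qDeriv_coeff hq1 f i
  intro h0
  rw [h0, mul_zero] at hkey
  rcases mul_eq_zero.mp hkey.symm with h1 | h1
  · exact (sub_ne_zero.mpr (qpow_ne_one hq0 habs (Nat.succ_ne_zero i))) h1
  · exact h h1

lemma qDeriv_natDegree {q : ℂ} (hq0 : q ≠ 0) (habs : ‖q‖ ≠ 1) {f : ℂ[X]}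
    (hf : f ≠ 0) (hd : 1 ≤ f.natDegree) :
    qDeriv q f ≠ 0 ∧ (qDeriv q f).natDegree = f.natDegree - 1 := by
  set d := f.natDegree with hdd
  have hlead : (qDeriv q f).coeff (d - 1) ≠ 0 := by
    apply qDeriv_coeff_ne_zero hq0 habs
    rw [Nat.sub_add_cancel hd]
    exact Polynomial.leadingCoeff_ne_zero.mpr hf
  have hne : qDeriv q f ≠ 0 := fun h => hlead (by simp [h])
  refine ⟨hne, le_antisymm ?_ (Polynomial.le_natDegree_of_ne_zero hlead)⟩
  rw [Polynomial.natDegree_le_iff_coeff_eq_zero]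
  intro m hm
  apply qDeriv_coeff_eq_zero (q_ne_one habs)
  apply Polynomial.coeff_eq_zero_of_natDegree_lt
  omega

lemma qDeriv_iter_natDegree {q : ℂ} (hq0 : q ≠ 0) (habs : ‖q‖ ≠ 1) {P : ℂ[X]}
    (hP : P ≠ 0) (k : ℕ) (hk : k ≤ P.natDegree) :
    (qDeriv q)^[k] P ≠ 0 ∧ ((qDeriv q)^[k] P).natDegree = P.natDegree - k := by
  induction k with
  | zero => simpa using hP
  | succ k ih =>
    obtain ⟨h1, h2⟩ := ih (Nat.le_of_succ_le hk)
    rw [Function.iterate_succ_apply']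
    have hd1 : 1 ≤ ((qDeriv q)^[k] P).natDegree := by omega
    obtain ⟨h3, h4⟩ := qDeriv_natDegree hq0 habs h1 hd1
    exact ⟨h3, by omega⟩

lemma comp_dvd {q : ℂ} {u : ℂ} {m : ℕ} {f : ℂ[X]}
    (h : (X - C (q * u)) ^ m ∣ f) : (X - C u) ^ m ∣ f.comp (C q * X) := by
  obtain ⟨e, he⟩ := h
  refine ⟨C (q ^ m) * e.comp (C q * X), ?_⟩
  rw [he, mul_comp, pow_comp, sub_comp, X_comp, C_comp]
  rw [show C q * X - C (q * u) = C q * (X - C u) by rw [C_mul]; ring]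
  rw [mul_pow, ← C_pow]
  ring

lemma dvd_of_comp_dvd {q : ℂ} (hq0 : q ≠ 0) {u : ℂ} {m : ℕ} {f : ℂ[X]}
    (h : (X - C u) ^ m ∣ f.comp (C q * X)) : (X - C (q * u)) ^ m ∣ f := by
  have h2 : (X - C (q⁻¹ * (q * u))) ^ m ∣ f.comp (C q * X) := by
    rw [inv_mul_cancel_left₀ hq0]; exact h
  have h3 := comp_dvd (q := q⁻¹) h2
  have hc : (C q * X).comp (C q⁻¹ * X) = X := by
    rw [mul_comp, C_comp, X_comp, ← mul_assoc, ← C_mul, mul_inv_cancel₀ hq0, C_1, one_mul]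
  rw [Polynomial.comp_assoc, hc, comp_X] at h3
  exact h3

lemma qPow_monic (q w : ℂ) (m : ℕ) : (qPow q w m).Monic :=
  monic_prod_of_monic _ _ (fun _ _ => monic_X_sub_C _)

lemma qPow_natDegree (q w : ℂ) (m : ℕ) : (qPow q w m).natDegree = m := by
  rw [qPow, Polynomial.natDegree_prod_of_monic _ _ (fun _ _ => monic_X_sub_C _)]
  simp only [natDegree_X_sub_C]
  simp

lemma roots_qPow (q w : ℂ) (m : ℕ) :
    (qPow q w m).roots = (Multiset.range m).map (fun i => q ^ i * w) := by
  have h : qPow q w m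
      = (((Multiset.range m).map (fun i => q ^ i * w)).map (fun a => X - C a)).prod := by
    rw [Multiset.map_map, qPow, Finset.prod_eq_multiset_prod, Finset.range_val]
    rfl
  rw [h, roots_multiset_prod_X_sub_C]

open scoped Classical in
lemma count_roots_qPow_ne_zero {q : ℂ} (hq0 : q ≠ 0) (habs : ‖q‖ ≠ 1)
    (w : ℂ) (m : ℕ) {u : ℂ} (hu : u ≠ 0) :
    ((qPow q w m).roots).count u = if ∃ i < m, q ^ i * w = u then 1 else 0 := by
  rw [roots_qPow, Multiset.count_map]
  split
  · next hex =>
    obtain ⟨i, him, hi⟩ := hex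
    have hw : w ≠ 0 := by rintro rfl; simp at hi; exact hu hi.symm
    have heq : Multiset.filter (fun a => u = q ^ a * w) (Multiset.range m) = {i} := by
      rw [show (Multiset.range m) = (Finset.range m).val from rfl, ← Finset.filter_val]
      rw [show (Finset.filter (fun a => u = q ^ a * w) (Finset.range m)) = {i} from ?_]
      · rfl
      · rw [Finset.eq_singleton_iff_unique_mem]
        refine ⟨Finset.mem_filter.mpr ⟨Finset.mem_range.mpr him, hi.symm⟩, ?_⟩
        intro a ha
        obtain ⟨-, ha2⟩ := Finset.mem_filter.mp ha
        apply qpow_inj hq0 habs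
        exact mul_right_cancel₀ hw (ha2.symm.trans hi.symm)
    rw [heq]; rfl
  · next hex =>
    push_neg at hex
    rw [Multiset.card_eq_zero, Multiset.filter_eq_nil]
    intro a ha h
    exact hex a (Multiset.mem_range.mp ha) h.symm

lemma count_roots_qPow_zero {q : ℂ} (hq0 : q ≠ 0) (w : ℂ) (m : ℕ) :
    ((qPow q w m).roots).count 0 = if w = 0 then m else 0 := by
  rw [roots_qPow, Multiset.count_map]
  split
  · next h =>
    subst h
    simp only [mul_zero]
    rw [Multiset.filter_eq_self.mpr (fun _ _ => trivial), Multiset.card_range]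
  · next h =>
    rw [Multiset.card_eq_zero, Multiset.filter_eq_nil]
    intro a ha hc
    rcases mul_eq_zero.mp hc.symm with h1 | h1
    · exact pow_ne_zero a hq0 h1
    · exact h h1

lemma chainProd_monic {q : ℂ} {N : ℕ} (zz : Fin N → ℂ) (m : Fin N → ℕ) (s : Finset (Fin N)) :
    (∏ j ∈ s, qPow q (zz j) (m j)).Monic :=
  monic_prod_of_monic _ _ (fun _ _ => qPow_monic _ _ _)

lemma count_roots_chainProd {q : ℂ} {N : ℕ} (zz : Fin N → ℂ) (m : Fin N → ℕ)
    (s : Finset (Fin N)) (u : ℂ) :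
    ((∏ j ∈ s, qPow q (zz j) (m j)).roots).count u
      = ∑ j ∈ s, ((qPow q (zz j) (m j)).roots).count u := by
  classical
  rw [Polynomial.roots_prod _ _ (chainProd_monic zz m s).ne_zero, Multiset.count_bind]
  rfl

open scoped Classical in
lemma count_roots_chainProd_ne_zero {q : ℂ} (hq0 : q ≠ 0) (habs : ‖q‖ ≠ 1)
    {N : ℕ} (zz : Fin N → ℂ) (m : Fin N → ℕ) (s : Finset (Fin N)) {u : ℂ} (hu : u ≠ 0) :
    ((∏ j ∈ s, qPow q (zz j) (m j)).roots).count u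
      = (s.filter (fun j => ∃ i < m j, q ^ i * zz j = u)).card := by
  rw [count_roots_chainProd]
  rw [Finset.card_filter]
  apply Finset.sum_congr rfl
  intro j _
  rw [count_roots_qPow_ne_zero hq0 habs _ _ hu]

open scoped Classical in
lemma count_roots_chainProd_zero {q : ℂ} (hq0 : q ≠ 0)
    {N : ℕ} (zz : Fin N → ℂ) (m : Fin N → ℕ) (s : Finset (Fin N)) :
    ((∏ j ∈ s, qPow q (zz j) (m j)).roots).count 0
      = ∑ j ∈ s, if zz j = 0 then m j else 0 := by
  rw [count_roots_chainProd]
  apply Finset.sum_congr rfl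
  intro j _
  rw [count_roots_qPow_zero hq0]

end QAux
namespace QAux

lemma coprime_X_sub_C_X {v : ℂ} (hv : v ≠ 0) : IsCoprime (X - C v) (X : ℂ[X]) := by
  refine ⟨-C v⁻¹, C v⁻¹, ?_⟩
  have h : -C v⁻¹ * (X - C v) + C v⁻¹ * X = C v⁻¹ * C v := by ring
  rw [h, ← C_mul, inv_mul_cancel₀ hv, C_1]

lemma C_unit_cancel {c : ℂ} (hc : c ≠ 0) {d y : ℂ[X]} (h : d ∣ C c * y) : d ∣ y := by
  obtain ⟨t, ht⟩ := h
  refine ⟨C c⁻¹ * t, ?_⟩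
  have h2 : C c⁻¹ * (C c * y) = y := by
    rw [← mul_assoc, ← C_mul, inv_mul_cancel₀ hc, C_1, one_mul]
  rw [← h2, ht]; ring

lemma X_pow_dvd_qDeriv {q : ℂ} (hq1 : q ≠ 1) {f : ℂ[X]} {t : ℕ}
    (h : X ^ t ∣ f) : X ^ (t - 1) ∣ qDeriv q f := by
  rw [Polynomial.X_pow_dvd_iff] at h ⊢
  intro d hd
  exact qDeriv_coeff_eq_zero hq1 (h (d + 1) (by omega))

lemma coeff_iter_ne_zero {q : ℂ} (hq0 : q ≠ 0) (habs : ‖q‖ ≠ 1) {P : ℂ[X]}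
    (hP : P ≠ 0) :
    ∀ k ≤ rootMultiplicity 0 P,
      ((qDeriv q)^[k] P).coeff (rootMultiplicity 0 P - k) ≠ 0 := by
  set m0 := rootMultiplicity 0 P with hm0
  intro k
  induction k with
  | zero =>
    intro _
    have h1 : (X : ℂ[X]) ^ m0 ∣ P := by
      have := Polynomial.pow_rootMultiplicity_dvd P 0
      rwa [C_0, sub_zero] at this
    have h2 : ¬ (X : ℂ[X]) ^ (m0 + 1) ∣ P := by
      have := (Polynomial.rootMultiplicity_le_iff hP 0 m0).mp le_rfl
      rwa [C_0, sub_zero] at this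
    rw [Polynomial.X_pow_dvd_iff] at h1
    rw [Polynomial.X_pow_dvd_iff] at h2
    push_neg at h2
    obtain ⟨d, hd, hne⟩ := h2
    have : d = m0 := by
      rcases Nat.lt_or_ge d m0 with h | h
      · exact absurd (h1 d h) hne
      · omega
    subst this
    simpa using hne
  | succ k ih =>
    intro hk
    rw [Function.iterate_succ_apply']
    have h : m0 - (k + 1) + 1 = m0 - k := by omega
    apply qDeriv_coeff_ne_zero hq0 habs
    rw [h]
    exact ih (by omega)

lemma dvd_iterate {q : ℂ} (hq0 : q ≠ 0) (habs : ‖q‖ ≠ 1) {P : ℂ[X]}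
    {u : ℂ} (hu : u ≠ 0) {M n : ℕ}
    (hcov : ∀ j ≤ n, (X - C (q ^ j * u)) ^ M ∣ P) :
    ∀ k j, k + j ≤ n → (X - C (q ^ j * u)) ^ M ∣ (qDeriv q)^[k] P := by
  have hq1 : q ≠ 1 := q_ne_one habs
  intro k
  induction k with
  | zero => intro j hj; simpa using hcov j (by omega)
  | succ k ih =>
    intro j hj
    have h1 := ih j (by omega)
    have h2 := ih (j + 1) (by omega)
    rw [Function.iterate_succ_apply']
    set f := (qDeriv q)^[k] P with hf
    have hcomp : (X - C (q ^ j * u)) ^ M ∣ f.comp (C q * X) := by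
      apply comp_dvd
      rwa [show q * (q ^ j * u) = q ^ (j + 1) * u by rw [← mul_assoc, ← pow_succ']]
    have hdiff : (X - C (q ^ j * u)) ^ M ∣ C (q - 1) * (X * qDeriv q f) := by
      rw [qDeriv_key hq1]
      exact dvd_sub hcomp h1
    have hXg : (X - C (q ^ j * u)) ^ M ∣ X * qDeriv q f :=
      C_unit_cancel (sub_ne_zero.mpr hq1) hdiff
    exact ((coprime_X_sub_C_X (mul_ne_zero (pow_ne_zero j hq0) hu)).pow_left).dvd_of_dvd_mul_left hXg

lemma iterate_transfer {q : ℂ} (hq0 : q ≠ 0) (habs : ‖q‖ ≠ 1) {P : ℂ[X]}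
    {u : ℂ} {M n : ℕ}
    (hdvd : ∀ k ≤ n, (X - C u) ^ M ∣ (qDeriv q)^[k] P) :
    ∀ j k, j + k ≤ n → (X - C (q ^ j * u)) ^ M ∣ (qDeriv q)^[k] P := by
  have hq1 : q ≠ 1 := q_ne_one habs
  intro j
  induction j with
  | zero => intro k hk; simpa using hdvd k (by omega)
  | succ j ih =>
    intro k hk
    have h1 := ih k (by omega)
    have h2 := ih (k + 1) (by omega)
    rw [Function.iterate_succ_apply'] at h2
    have hcomp : (X - C (q ^ j * u)) ^ M ∣ ((qDeriv q)^[k] P).comp (C q * X) := by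
      rw [comp_eq_add_qDeriv hq1]
      exact dvd_add h1 ((h2.mul_left X).mul_left (C (q - 1)))
    have := dvd_of_comp_dvd hq0 hcomp
    rwa [show q * (q ^ j * u) = q ^ (j + 1) * u by rw [← mul_assoc, ← pow_succ']] at this

lemma gcdList_dvd {l : List (Polynomial ℂ)} {x : Polynomial ℂ} (hx : x ∈ l) :
    gcdList l ∣ x := by
  induction l with
  | nil => simp at hx
  | cons a t ih =>
    rcases List.mem_cons.mp hx with rfl | hx
    · exact EuclideanDomain.gcd_dvd_left _ _
    · exact (EuclideanDomain.gcd_dvd_right _ _).trans (ih hx)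

lemma dvd_gcdList {l : List (Polynomial ℂ)} {d : Polynomial ℂ} (h : ∀ x ∈ l, d ∣ x) :
    d ∣ gcdList l := by
  induction l with
  | nil => simp [gcdList]
  | cons a t ih =>
    exact EuclideanDomain.dvd_gcd (h a (List.mem_cons_self))
      (ih fun x hx => h x (List.mem_cons_of_mem a hx))

end QAux
namespace QAux

open scoped Classical in
lemma count_zero_chain {q : ℂ} (hq0 : q ≠ 0) {P : Polynomial ℂ}
    (F : QFactorization q P) (μ : ℕ) :
    ((∏ j, qPow q (F.z j) (F.n j - μ)).roots).count 0
      = ((∏ j, qPow q (F.z j) (F.n j)).roots).count 0 - μ := by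
  rw [count_roots_chainProd_zero hq0, count_roots_chainProd_zero hq0]
  rw [← Finset.sum_filter, ← Finset.sum_filter]
  set S := Finset.univ.filter (fun j => F.z j = 0) with hS
  rcases S.eq_empty_or_nonempty with hSe | hSne
  · rw [hSe]; simp
  · obtain ⟨j0, hj0S, hj0min⟩ : ∃ j0 ∈ S, ∀ x ∈ S, j0 ≤ x :=
      ⟨S.min' hSne, S.min'_mem hSne, fun x hx => S.min'_le x hx⟩
    have hz : F.z j0 = 0 := (Finset.mem_filter.mp hj0S).2
    rcases F.chain j0 with ⟨-, -, hmult⟩ | ⟨hzz, -, -⟩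
    swap
    · exact absurd hz hzz
    have hSsub : (Finset.univ.filter (fun k => j0 ≤ k)).filter (fun k => F.z k = 0) = S := by
      ext k
      simp only [Finset.mem_filter, Finset.mem_univ, true_and, hS]
      constructor
      · rintro ⟨-, h⟩; exact h
      · intro h; exact ⟨hj0min k (Finset.mem_filter.mpr ⟨Finset.mem_univ _, h⟩), h⟩
    have htail : ((∏ k ∈ Finset.univ.filter (fun k => j0 ≤ k),
        qPow q (F.z k) (F.n k)).roots).count 0 = ∑ k ∈ S, F.n k := by
      rw [count_roots_chainProd_zero hq0, ← Finset.sum_filter, hSsub]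
    have hsum : ∑ k ∈ S, F.n k = F.n j0 := by
      rw [← htail]
      rw [Polynomial.count_roots]
      exact hmult
    have hSsingle : S = {j0} := by
      apply Finset.eq_singleton_iff_unique_mem.mpr ⟨hj0S, ?_⟩
      intro x hx
      by_contra hxj
      have hpair : ({j0, x} : Finset _) ⊆ S := by
        intro y hy
        rcases Finset.mem_insert.mp hy with rfl | hy
        · exact hj0S
        · rw [Finset.mem_singleton.mp hy]; exact hx
      have hle := Finset.sum_le_sum_of_subset (f := F.n) hpair
      rw [Finset.sum_pair (fun h => hxj h.symm)] at hle
      have := F.n_pos x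
      omega
    rw [hSsingle, Finset.sum_singleton, Finset.sum_singleton]

open scoped Classical in
lemma claimC {q : ℂ} (hq0 : q ≠ 0) (habs : ‖q‖ ≠ 1) (n : ℕ) {P : Polynomial ℂ}
    (F : QFactorization q P) {w : ℂ} (hw : w ≠ 0)
    (hbig : ∀ k ≤ n,
      (Finset.univ.filter (fun j => ∃ i, i + n < F.n j ∧ q ^ i * F.z j = w)).card + 1
        ≤ P.roots.count (q ^ k * w)) : False := by
  set M := (Finset.univ.filter (fun j => ∃ i, i + n < F.n j ∧ q ^ i * F.z j = w)).card with hM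
  have hcount : ∀ u : ℂ, u ≠ 0 → P.roots.count u
      = (Finset.univ.filter (fun j => ∃ i < F.n j, q ^ i * F.z j = u)).card := by
    intro u hu
    have hr := congrArg Polynomial.roots F.eq
    rw [Polynomial.roots_C_mul _ F.A_ne] at hr
    rw [hr, count_roots_chainProd_ne_zero hq0 habs _ _ _ hu]
  have hex : ∀ p ≤ n, ∃ j', (∃ i < F.n j', q ^ i * F.z j' = q ^ p * w)
      ∧ ¬(∃ i, i + n < F.n j' ∧ q ^ i * F.z j' = w) := by
    intro p hp
    have hcc := hbig p hp
    rw [hcount _ (mul_ne_zero (pow_ne_zero _ hq0) hw)] at hcc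
    by_contra hno
    push_neg at hno
    have hsub : (Finset.univ.filter (fun j => ∃ i < F.n j, q ^ i * F.z j = q ^ p * w))
        ⊆ (Finset.univ.filter (fun j => ∃ i, i + n < F.n j ∧ q ^ i * F.z j = w)) := by
      intro j hj
      rw [Finset.mem_filter] at hj ⊢
      obtain ⟨i, h1, h2⟩ := hno j hj.2
      exact ⟨hj.1, i, h1, h2⟩
    have := Finset.card_le_card hsub
    omega
  set T := Finset.univ.filter (fun j => (¬∃ i, i + n < F.n j ∧ q ^ i * F.z j = w)
      ∧ ∃ p ≤ n, ∃ i < F.n j, q ^ i * F.z j = q ^ p * w) with hT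
  have hTne : T.Nonempty := by
    obtain ⟨j', h1, h2⟩ := hex 0 (Nat.zero_le n)
    exact ⟨j', Finset.mem_filter.mpr ⟨Finset.mem_univ _, h2, 0, Nat.zero_le n, h1⟩⟩
  obtain ⟨j0, hj0T, hj0min⟩ : ∃ j0 ∈ T, ∀ x ∈ T, j0 ≤ x :=
    ⟨T.min' hTne, T.min'_mem hTne, fun x hx => T.min'_le x hx⟩
  rw [Finset.mem_filter] at hj0T
  obtain ⟨-, hnF, k0, hk0n, i, hin, hcov⟩ := hj0T
  have hz0 : F.z j0 ≠ 0 := by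
    intro h
    rw [h, mul_zero] at hcov
    exact (mul_ne_zero (pow_ne_zero _ hq0) hw) hcov.symm
  have heval : ∀ p ≤ n, (∏ k ∈ Finset.univ.filter (fun k => j0 ≤ k),
      qPow q (F.z k) (F.n k)).eval (q ^ p * w) = 0 := by
    intro p hp
    obtain ⟨j', hcv, hnf⟩ := hex p hp
    have hj'T : j' ∈ T := Finset.mem_filter.mpr ⟨Finset.mem_univ _, hnf, p, hp, hcv⟩
    have hj0j' : j0 ≤ j' := hj0min j' hj'T
    obtain ⟨i', hi', he⟩ := hcv
    rw [Polynomial.eval_prod]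
    apply Finset.prod_eq_zero (Finset.mem_filter.mpr ⟨Finset.mem_univ _, hj0j'⟩)
    rw [qPow, Polynomial.eval_prod]
    apply Finset.prod_eq_zero (Finset.mem_range.mpr hi')
    rw [Polynomial.eval_sub, Polynomial.eval_X, Polynomial.eval_C, he, sub_self]
  rcases F.chain j0 with ⟨hzz, -, -⟩ | ⟨-, -, hne⟩
  · exact hz0 hzz
  by_cases hik : k0 ≤ i
  · have hwz : w = q ^ (i - k0) * F.z j0 := by
      have h : q ^ k0 * (q ^ (i - k0) * F.z j0) = q ^ k0 * w := by
        rw [← mul_assoc, ← pow_add, show k0 + (i - k0) = i from by omega]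
        exact hcov
      exact (mul_left_cancel₀ (pow_ne_zero k0 hq0) h).symm
    have hnle : F.n j0 ≤ (i - k0) + n := by
      by_contra hlt
      push_neg at hlt
      exact hnF ⟨i - k0, hlt, hwz.symm⟩
    set p := k0 + (F.n j0 - i) with hp
    have hpn : p ≤ n := by omega
    have hpt : q ^ p * w = q ^ (F.n j0) * F.z j0 := by
      rw [hwz, ← mul_assoc, ← pow_add, show p + (i - k0) = F.n j0 from by omega]
    have h0 := heval p hpn
    rw [hpt] at h0
    exact hne h0
  · push_neg at hik
    have hzw : F.z j0 = q ^ (k0 - i) * w := by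
      have h : q ^ i * (q ^ (k0 - i) * w) = q ^ i * F.z j0 := by
        rw [← mul_assoc, ← pow_add, show i + (k0 - i) = k0 from by omega]
        exact hcov.symm
      exact (mul_left_cancel₀ (pow_ne_zero i hq0) h).symm
    set p := k0 - i - 1 with hp
    have hpn : p ≤ n := by omega
    have hpt : q⁻¹ * F.z j0 = q ^ p * w := by
      rw [hzw, show k0 - i = p + 1 from by omega, pow_succ', ← mul_assoc, ← mul_assoc,
        inv_mul_cancel₀ hq0, one_mul]
    have h0 := heval p hpn
    rw [← hpt] at h0
    exact F.maximal j0 hz0 h0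

end QAux
/-- gcd(P, D_q P, ..., D_q^n P) via the canonical factorization. -/
theorem gcd_qDeriv_iterates (q : ℂ) (hq0 : q ≠ 0) (habs : ‖q‖ ≠ 1) (n : ℕ)
    (P : Polynomial ℂ) (F : QFactorization q P) (hn : n ≤ P.natDegree) :
    ∃ cc : ℂ, cc ≠ 0 ∧
      gcdList (((List.range (n + 1)).map (fun k => (qDeriv q)^[k] P)))
        = C cc * ∏ j, qPow q (F.z j) (F.n j - n) ∧
      (gcdList (((List.range (n + 1)).map (fun k => (qDeriv q)^[k] P)))).natDegree
        = ∑ j, (F.n j - n) := by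
  classical
  have hq1 : q ≠ 1 := QAux.q_ne_one habs
  have hP0 : P ≠ 0 := by
    rw [F.eq]
    exact mul_ne_zero (C_ne_zero.mpr F.A_ne) (QAux.chainProd_monic _ _ _).ne_zero
  have hrootsP : P.roots = (∏ j, qPow q (F.z j) (F.n j)).roots := by
    have hr := congrArg Polynomial.roots F.eq
    rwa [Polynomial.roots_C_mul _ F.A_ne] at hr
  set g : ℕ → Polynomial ℂ := fun k => (qDeriv q)^[k] P with hg
  set Φ : Polynomial ℂ := ∏ j, qPow q (F.z j) (F.n j - n) with hPhi
  have hΦmonic : Φ.Monic := QAux.chainProd_monic _ _ _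
  have hΦne : Φ ≠ 0 := hΦmonic.ne_zero
  have hgk : ∀ k ≤ n, g k ≠ 0 ∧ (g k).natDegree = P.natDegree - k :=
    fun k hk => QAux.qDeriv_iter_natDegree hq0 habs hP0 k (le_trans hk hn)
  have hcountP : ∀ u : ℂ, u ≠ 0 → P.roots.count u
      = (Finset.univ.filter (fun j => ∃ i < F.n j, q ^ i * F.z j = u)).card := by
    intro u hu
    rw [hrootsP, QAux.count_roots_chainProd_ne_zero hq0 habs _ _ _ hu]
  have hcountΦ : ∀ u : ℂ, u ≠ 0 → Φ.roots.count u
      = (Finset.univ.filter (fun j => ∃ i < F.n j - n, q ^ i * F.z j = u)).card := by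
    intro u hu
    rw [hPhi, QAux.count_roots_chainProd_ne_zero hq0 habs _ _ _ hu]
  have hcountΦ0 : Φ.roots.count 0 = P.roots.count 0 - n := by
    rw [hrootsP, hPhi]
    exact QAux.count_zero_chain hq0 F n
  set m0 := P.roots.count 0 with hm0
  have hm0rm : m0 = rootMultiplicity 0 P := Polynomial.count_roots P
  have hbase : ∀ u : ℂ, u ≠ 0 → ∀ j ≤ n, (X - C (q ^ j * u)) ^ (Φ.roots.count u) ∣ P := by
    intro u hu j hj
    have hsub : (Finset.univ.filter (fun j' => ∃ i < F.n j' - n, q ^ i * F.z j' = u))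
        ⊆ (Finset.univ.filter (fun j' => ∃ i < F.n j', q ^ i * F.z j' = q ^ j * u)) := by
      intro j' hj'
      rw [Finset.mem_filter] at hj' ⊢
      obtain ⟨-, i, hi1, hi2⟩ := hj'
      refine ⟨Finset.mem_univ _, i + j, by omega, ?_⟩
      rw [pow_add, mul_comm (q ^ i) (q ^ j), mul_assoc, hi2]
    have hle : Φ.roots.count u ≤ rootMultiplicity (q ^ j * u) P := by
      rw [← Polynomial.count_roots, hcountP _ (mul_ne_zero (pow_ne_zero _ hq0) hu),
        hcountΦ _ hu]
      exact Finset.card_le_card hsub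
    exact (pow_dvd_pow _ hle).trans (Polynomial.pow_rootMultiplicity_dvd P _)
  have hpartA : ∀ u : ℂ, u ≠ 0 → ∀ k ≤ n, (X - C u) ^ (Φ.roots.count u) ∣ g k := by
    intro u hu k hk
    have h := QAux.dvd_iterate hq0 habs hu (hbase u hu) k 0 (by omega)
    simpa using h
  have hpartA0 : ∀ k ≤ n, (X : Polynomial ℂ) ^ (Φ.roots.count 0) ∣ g k := by
    intro k hk
    have hX : ∀ k, (X : Polynomial ℂ) ^ (m0 - k) ∣ g k := by
      intro k
      induction k with
      | zero =>
        have h := Polynomial.pow_rootMultiplicity_dvd P (0 : ℂ)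
        rw [C_0, sub_zero, ← hm0rm] at h
        simpa [hg] using (pow_dvd_pow (X : Polynomial ℂ) (Nat.sub_le m0 0)).trans h
      | succ k ih =>
        have h := QAux.X_pow_dvd_qDeriv hq1 ih
        rw [show m0 - k - 1 = m0 - (k + 1) from by omega] at h
        simpa [hg, Function.iterate_succ_apply'] using h
    exact (pow_dvd_pow _ (by omega : Φ.roots.count 0 ≤ m0 - k)).trans (hX k)
  have hΦdvd : ∀ k ≤ n, Φ ∣ g k := by
    intro k hk
    have hgk0 := (hgk k hk).1
    have hle : Φ.roots ≤ (g k).roots := by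
      rw [Multiset.le_iff_count]
      intro u
      by_cases hu : u = 0
      · subst hu
        rw [Polynomial.count_roots (g k), Polynomial.le_rootMultiplicity_iff hgk0,
          C_0, sub_zero]
        exact hpartA0 k hk
      · rw [Polynomial.count_roots (g k), Polynomial.le_rootMultiplicity_iff hgk0]
        exact hpartA u hu k hk
    have heq := (IsAlgClosed.splits Φ).eq_prod_roots_of_monic
      hΦmonic
    rw [heq]
    exact (Multiset.prod_X_sub_C_dvd_iff_le_roots hgk0 _).mpr hle
  have hmem : ∀ k ≤ n, g k ∈ (List.range (n + 1)).map (fun k => (qDeriv q)^[k] P) := by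
    intro k hk
    exact List.mem_map.mpr ⟨k, List.mem_range.mpr (by omega), rfl⟩
  set G := gcdList ((List.range (n + 1)).map (fun k => (qDeriv q)^[k] P)) with hGdef
  have hGdvd : ∀ k ≤ n, G ∣ g k := fun k hk => QAux.gcdList_dvd (hmem k hk)
  have hG0 : G ≠ 0 := by
    intro h
    apply hP0
    have h2 := hGdvd 0 (Nat.zero_le n)
    rw [h] at h2
    simpa [hg] using (zero_dvd_iff.mp h2)
  have hΦG : Φ ∣ G := by
    apply QAux.dvd_gcdList
    intro x hx
    obtain ⟨k, hk, rfl⟩ := List.mem_map.mp hx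
    exact hΦdvd k (by have := List.mem_range.mp hk; omega)
  have hGΦ : G ∣ Φ := by
    have hGle : G.roots ≤ Φ.roots := by
      rw [Multiset.le_iff_count]
      intro u
      by_contra hcon
      push_neg at hcon
      have hdGu : ∀ k ≤ n, (X - C u) ^ (Φ.roots.count u + 1) ∣ g k := by
        intro k hk
        refine dvd_trans ?_ (hGdvd k hk)
        have hle2 : Φ.roots.count u + 1 ≤ rootMultiplicity u G := by
          rw [← Polynomial.count_roots]
          omega
        exact (pow_dvd_pow _ hle2).trans (Polynomial.pow_rootMultiplicity_dvd G u)
      by_cases hu : u = 0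
      · subst hu
        have h1 := hdGu (min n m0) (by omega)
        rw [C_0, sub_zero, Polynomial.X_pow_dvd_iff] at h1
        have h2 := QAux.coeff_iter_ne_zero hq0 habs hP0 (min n m0) (by omega)
        rw [← hm0rm] at h2
        exact h2 (h1 (m0 - min n m0) (by omega))
      · have htrans := QAux.iterate_transfer hq0 habs (hdGu · ·)
        have hbig : ∀ k ≤ n,
            (Finset.univ.filter (fun j => ∃ i, i + n < F.n j ∧ q ^ i * F.z j = u)).card + 1
              ≤ P.roots.count (q ^ k * u) := by
          intro k hk
          have hd := htrans k 0 (by omega)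
          simp only [Function.iterate_zero_apply] at hd
          have hle3 : Φ.roots.count u + 1 ≤ rootMultiplicity (q ^ k * u) P :=
            (Polynomial.le_rootMultiplicity_iff hP0).mpr hd
          rw [Polynomial.count_roots]
          have hconv : Φ.roots.count u
              = (Finset.univ.filter
                  (fun j => ∃ i, i + n < F.n j ∧ q ^ i * F.z j = u)).card := by
            rw [hcountΦ _ hu]
            congr 1
            apply Finset.filter_congr
            intro j _
            constructor
            · rintro ⟨i, h1, h2⟩; exact ⟨i, by omega, h2⟩
            · rintro ⟨i, h1, h2⟩; exact ⟨i, by omega, h2⟩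
          omega
        exact QAux.claimC hq0 habs n F hu hbig
    set R := G.roots with hR
    have heqG := (IsAlgClosed.splits G).eq_prod_roots
    rw [← hR] at heqG
    have hlc : G.leadingCoeff ≠ 0 := Polynomial.leadingCoeff_ne_zero.mpr hG0
    set c := G.leadingCoeff with hc
    have hpd : (R.map (fun a => X - C a)).prod ∣ Φ :=
      (Multiset.prod_X_sub_C_dvd_iff_le_roots hΦne _).mpr hGle
    have hGdvdprod : G ∣ (R.map (fun a => X - C a)).prod := by
      refine ⟨C c⁻¹, ?_⟩
      rw [heqG, mul_comm (C c), mul_assoc, ← C_mul, mul_inv_cancel₀ hlc, C_1, mul_one]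
    exact hGdvdprod.trans hpd
  have hassoc : Associated Φ G := associated_of_dvd_dvd hΦG hGΦ
  obtain ⟨v, hv⟩ := hassoc
  obtain ⟨cc, hccu, hcc⟩ := Polynomial.isUnit_iff.mp v.isUnit
  have hΦdeg : Φ.natDegree = ∑ j, (F.n j - n) := by
    rw [hPhi, Polynomial.natDegree_prod_of_monic _ _ (fun j _ => QAux.qPow_monic _ _ _)]
    exact Finset.sum_congr rfl (fun j _ => QAux.qPow_natDegree _ _ _)
  refine ⟨cc, hccu.ne_zero, ?_, ?_⟩
  · rw [← hv, ← hcc]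
    ring
  · rw [← hv, ← hcc, mul_comm, Polynomial.natDegree_C_mul hccu.ne_zero, hΦdeg]
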